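/- With the setup of a lightlike hypersurface of an indefinite Sasakian manifold tangent to ζ, one has g(R(U,V)ζ, ζ) = -1 and g(R(U,ζ)V, ζ) = -1. -/
import Mathlib


theorem stmt_13
    (F : Type) [CommRing F]
    (Γb : Type) [AddCommGroup Γb] [Module F Γb]
    (gbar : Γb →ₗ[F] Γb →ₗ[F] F)
    (nablab : Γb → Γb → Γb) (phib : Γb → Γb) (zetab : Γb) (etab : Γb → F)
    (Db : Γb → F → F) (bracketb : Γb → Γb → Γb)
    (hgbarSymm : ∀ X Y, gbar X Y = gbar Y X)
    (hSas1 : ∀ X, phib (phib X) = -X + etab X • zetab)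
    (hSas2 : etab zetab = 1)
    (hSas3 : ∀ X, etab (phib X) = 0)
    (hSas4 : ∀ X, gbar X zetab = etab X)
    (hSas5 : ∀ X Y, gbar (phib X) (phib Y) = gbar X Y - etab X * etab Y)
    (hSas6 : ∀ X Y, (2 : F) * gbar (phib X) Y = Db X (etab Y) - Db Y (etab X) - etab (bracketb X Y))
    (hSas7 : ∀ X Y, nablab X (phib Y) - phib (nablab X Y) = etab Y • X - gbar X Y • zetab)
    (hLC1 : ∀ X Y Z, Db X (gbar Y Z) = gbar (nablab X Y) Z + gbar Y (nablab X Z))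
    (hLC2 : ∀ X Y, nablab X Y - nablab Y X = bracketb X Y)
    (Γ : Type) [AddCommGroup Γ] [Module F Γ]
    (incl : Γ →ₗ[F] Γb)
    (g : Γ →ₗ[F] Γ →ₗ[F] F)
    (hg : ∀ X Y, g X Y = gbar (incl X) (incl Y))
    (nabla : Γ → Γ → Γ) (B : Γ → Γ → F) (N : Γb) (xi : Γ)
    (hGauss : ∀ X Y, nablab (incl X) (incl Y) = incl (nabla X Y) + B X Y • N)
    (AN : Γ → Γ) (tau : Γ → F)
    (hWein : ∀ X, nablab (incl X) N = -(incl (AN X)) + tau X • N)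
    (Astar : Γ → Γ)
    (hs13 : ∀ X, nabla X xi = -(Astar X) - tau X • xi)
    (P : Γ → Γ) (theta : Γ → F)
    (htheta : ∀ X, theta X = gbar (incl X) N)
    (hdecomp : ∀ X, X = P X + theta X • xi)
    (nablas : Γ → Γ → Γ) (C : Γ → Γ → F)
    (hs12 : ∀ X Y, nabla X (P Y) = nablas X (P Y) + C X (P Y) • xi)
    (hAstarB : ∀ X Y, g (Astar X) Y = B X Y)
    (hANC : ∀ X Y, g (AN X) (P Y) = C X (P Y))
    (hxiN : gbar (incl xi) N = 1) (hNN : gbar N N = (0 : F))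
    (zeta : Γ) (hzeta : incl zeta = zetab)
    (eta : Γ → F) (heta : ∀ X, eta X = etab (incl X))
    (U V : Γ) (hU : incl U = -(phib N)) (hV : incl V = -(phib (incl xi)))
    (u v : Γ → F) (hu : ∀ X, u X = g X V) (hv : ∀ X, v X = g X U)
    (phi : Γ → Γ) (hphi : ∀ X, phib (incl X) = incl (phi X) + u X • N)
    (hPzeta : P zeta = zeta) (hPU : P U = U) (hPV : P V = V)
    (bracket : Γ → Γ → Γ)
    (hbracket : ∀ X Y, incl (bracket X Y) = bracketb (incl X) (incl Y))
    (R : Γ → Γ → Γ → Γ)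
    (hR : ∀ X Y Z, R X Y Z = nabla X (nabla Y Z) - nabla Y (nabla X Z) - nabla (bracket X Y) Z)
    (h21 : ∀ X Y, R X Y zeta = eta Y • X + u Y • AN X - eta X • Y - u X • AN Y)
    (hz8 : phi zeta = 0 ∧ phi U = 0 ∧ phi V = xi)
    (hz7 : eta zeta = 1 ∧ eta U = 0 ∧ eta V = 0 ∧ (∀ X, eta (phi X) = 0))
    (he76 : u zeta = 0 ∧ u U = 1 ∧ u V = 0 ∧ (∀ X, u (phi X) = 0))
    (hz5 : v zeta = 0 ∧ v U = 0 ∧ v V = 1 ∧ (∀ X, v (phi X) = -(theta X)))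
    (he80 : theta zeta = 0 ∧ theta U = 0 ∧ theta V = 0 ∧ theta xi = 1 ∧ (∀ X, theta (phi X) = v X))
    (hgzeta : ∀ X, g X zeta = eta X)
    (h10 : ∀ X, B X zeta = u X)
    (h12 : ∀ X, C X zeta = v X)
    (h14 : ∀ X, B X U = C X V)
    (h73 : ∀ X Y, R X Y V =
      (nabla X (phi (Astar Y)) - phi (Astar (nabla X Y))) - (nabla Y (phi (Astar X)) - phi (Astar (nabla Y X)))
      + tau X • phi (Astar Y) - tau Y • phi (Astar X)
      - (Db (incl X) (tau Y) - Db (incl Y) (tau X) - tau (bracket X Y)) • V)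
    (h82 : ∀ X Y, g (nabla X (phi (Astar Y)) - phi (Astar (nabla X Y))) V = -(g (phi (Astar X)) (phi (Astar Y))) + B X V * B Y U)
    : g (R U V zeta) zeta = -1 ∧ g (R U zeta V) zeta = -1 := by
  obtain ⟨hz8a, hz8b, hz8c⟩ := hz8
  obtain ⟨hz7a, hz7b, hz7c, hz7d⟩ := hz7
  obtain ⟨he76a, he76b, he76c, he76d⟩ := he76
  obtain ⟨hz5a, hz5b, hz5c, hz5d⟩ := hz5
  obtain ⟨he80a, he80b, he80c, he80d, he80e⟩ := he80
  -- φ̄ ζ̄ = 0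
  have hphizeta : phib zetab = 0 := by
    rw [← hzeta, hphi, hz8a, he76a]; simp
  -- D̄_X 0 = 0
  have hDb0 : ∀ X, Db X (0:F) = 0 := by
    intro X
    have h := hLC1 X 0 0
    simpa using h
  have hnab0 : ∀ X Z, gbar (nablab X 0) Z = 0 := by
    intro X Z
    simpa [hDb0] using (hLC1 X 0 Z).symm
  -- skew symmetry of φ̄ w.r.t. ḡ
  have hskew : ∀ A C0, gbar (phib A) C0 = -(gbar A (phib C0)) := by
    intro A C0
    have h := hSas5 A (phib C0)
    rw [hSas1, hSas3, mul_zero, sub_zero] at h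
    simp only [map_add, map_neg, map_smul, smul_eq_mul] at h
    rw [hSas4, hSas3] at h
    linear_combination -h
  have hzphi : ∀ Wb, gbar zetab (phib Wb) = 0 := fun Wb => by
    rw [hgbarSymm, hSas4, hSas3]
  -- ḡ(N, ζ̄) = 0
  have hgNzeta : gbar N zetab = 0 := by
    rw [hgbarSymm, ← hzeta, ← htheta, he80a]
  -- ḡ(N, incl V) = 0
  have hthetaV : gbar N (incl V) = 0 := by
    rw [hgbarSymm, ← htheta, he80c]
  -- g(·, ξ) = 0
  have hpxi : phib (incl xi) = -(incl V) := by rw [hV, neg_neg]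
  have hetaxi : etab (incl xi) = 0 := by rw [← heta, ← hz8c]; exact hz7d V
  have hgxi : ∀ Z, g Z xi = 0 := by
    intro Z
    have h := hSas5 (incl Z) (incl xi)
    rw [hpxi, hphi, hetaxi, mul_zero, sub_zero] at h
    simp only [map_add, map_neg, map_smul, LinearMap.add_apply, LinearMap.neg_apply,
      LinearMap.smul_apply, smul_eq_mul] at h
    rw [hthetaV, ← hg, ← hu, he76d] at h
    rw [hg]
    linear_combination -h
  -- B is symmetric
  have hGaussXi : ∀ X Y, gbar (nablab (incl X) (incl Y)) (incl xi) = B X Y := by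
    intro X Y
    rw [hGauss]
    simp only [map_add, map_smul, LinearMap.add_apply, LinearMap.smul_apply, smul_eq_mul]
    rw [← hg, hgxi, hgbarSymm N, hxiN, zero_add, mul_one]
  have hBsymm : ∀ X Y, B X Y = B Y X := by
    intro X Y
    have h := congrArg (fun W => gbar W (incl xi)) (hLC2 (incl X) (incl Y))
    simp only [map_sub, LinearMap.sub_apply] at h
    rw [hGaussXi, hGaussXi, ← hbracket, ← hg, hgxi] at h
    linear_combination h
  -- key: ḡ(∇̄_X ζ̄, W) = -ḡ(X, φ̄W) when ḡ(W,ζ̄)=0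
  have hstar : ∀ Xb Wb, gbar Wb zetab = 0 →
      gbar (nablab Xb zetab) Wb = -(gbar Xb (phib Wb)) := by
    intro Xb Wb hW
    have hWeta : etab Wb = 0 := by rw [← hSas4]; exact hW
    have h7 := hSas7 Xb zetab
    rw [hphizeta, hSas2, one_smul] at h7
    have h7g := congrArg (fun z => gbar z (phib Wb)) h7
    simp only [map_sub, map_smul, LinearMap.sub_apply, LinearMap.smul_apply, smul_eq_mul] at h7g
    rw [hnab0, hzphi] at h7g
    have h5 := hSas5 (nablab Xb zetab) Wb
    rw [hWeta, mul_zero, sub_zero] at h5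
    linear_combination -h7g - h5
  -- key: η(∇_X W) = ḡ(incl X, φ̄(incl W)) when η(W)=0
  have hkey : ∀ X W, etab (incl W) = 0 →
      g (nabla X W) zeta = gbar (incl X) (phib (incl W)) := by
    intro X W hW
    have hW' : gbar (incl W) zetab = 0 := by rw [hSas4]; exact hW
    have h1 := hLC1 (incl X) (incl W) zetab
    rw [hW', hDb0, hGauss] at h1
    simp only [map_add, map_smul, LinearMap.add_apply, LinearMap.smul_apply, smul_eq_mul] at h1
    rw [hgNzeta, mul_zero, add_zero] at h1
    have h2 := hstar (incl X) (incl W) hW'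
    have hsym := hgbarSymm (incl W) (nablab (incl X) zetab)
    rw [hg, hzeta]
    linear_combination -h1 - hsym - h2
  -- φ̄(incl U) = N
  have hphiU : phib (incl U) = N := by
    rw [hphi, hz8b, he76b]; simp
  -- first key term
  have hterm1 : g (nabla U (phi (Astar zeta))) zeta = -1 := by
    have hW : etab (incl (phi (Astar zeta))) = 0 := by rw [← heta]; exact hz7d _
    rw [hkey U _ hW]
    have e1 : gbar N (incl (phi (Astar zeta))) = 1 := by
      rw [hgbarSymm, ← htheta, he80e, hv, hAstarB, hBsymm, h10, he76b]
    have h := hskew (incl U) (incl (phi (Astar zeta)))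
    rw [hphiU] at h
    linear_combination h - e1
  -- second key term
  have hterm2 : g (nabla zeta (phi (Astar U))) zeta = 0 := by
    have hW : etab (incl (phi (Astar U))) = 0 := by rw [← heta]; exact hz7d _
    rw [hkey zeta _ hW, hzeta, hzphi]
  constructor
  · -- g(R(U,V)ζ, ζ) = -1
    have hANVzeta : g (AN V) zeta = 1 := by
      have h := hANC V zeta
      rw [hPzeta, h12, hz5c] at h
      exact h
    rw [h21]
    simp only [map_add, map_sub, map_smul, LinearMap.add_apply, LinearMap.sub_apply,
      LinearMap.smul_apply, smul_eq_mul]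
    rw [hANVzeta]
    simp only [hgzeta, hz7b, hz7c, he76b, he76c]
    ring
  · -- g(R(U,ζ)V, ζ) = -1
    rw [h73 U zeta]
    simp only [map_add, map_sub, map_smul, map_neg, LinearMap.add_apply, LinearMap.sub_apply,
      LinearMap.neg_apply, LinearMap.smul_apply, smul_eq_mul]
    rw [hterm1, hterm2]
    rw [hgzeta (phi (Astar (nabla U zeta))), hgzeta (phi (Astar (nabla zeta U))),
      hgzeta (phi (Astar zeta)), hgzeta (phi (Astar U)), hgzeta V,
      hz7d, hz7d, hz7d, hz7d, hz7c]
    ring
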